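/- arXiv:1101.2940 — 4 statements merged into one kernel-verified Lean document; each statement's English description precedes it below -/
import Mathlib

section
/- For every natural number d ≥ 1 and every 0 < ε < 1 there exists a constant C > 0 (depending only on d and ε) such that the following holds. Let U be a finite type with |U| ≥ 2, let f : Finset U → ℝ be a submodular set function, let c : U → ℝ^d with 0 ≤ c_r(i) ≤ ε³·L_r for all i and r, let L ∈ ℝ^d with L_r > 0, and let x ∈ [0,1]^U satisfy Σ_{i∈U} x_i · c_r(i) ≤ L_r for all r. Then there exists x' ∈ [0,1]^U with at most C·ln|U| fractional entries such that Σ_{i∈U} x'_i · c_r(i) ≤ (1+ε)²·L_r for all r and F(x') ≥ F(x), where F is the extension by expectation of f. -/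
open scoped Classical

/-- The extension by expectation (multilinear extension) of a set function. -/
noncomputable def mulExt {U : Type*} [Fintype U] [DecidableEq U]
    (f : Finset U → ℝ) (y : U → ℝ) : ℝ :=
  ∑ R : Finset U, f R * ((∏ i ∈ R, y i) * ∏ i ∈ Rᶜ, (1 - y i))

namespace RedLog


variable {U : Type*} [Fintype U] [DecidableEq U]

lemma mulExt_update (f : Finset U → ℝ) (y : U → ℝ) (i : U) (s : ℝ) :
    mulExt f (Function.update y i s)
      = (1 - s) * mulExt f (Function.update y i 0) + s * mulExt f (Function.update y i 1) := by
  unfold mulExt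
  rw [Finset.mul_sum, Finset.mul_sum, ← Finset.sum_add_distrib]
  refine Finset.sum_congr rfl fun R _ => ?_
  by_cases hi : i ∈ R
  · have hc : ∀ s : ℝ, ∏ k ∈ Rᶜ, (1 - Function.update y i s k) = ∏ k ∈ Rᶜ, (1 - y k) := by
      intro s
      refine Finset.prod_congr rfl fun k hk => ?_
      rw [Function.update_of_ne]
      rintro rfl
      exact (Finset.mem_compl.mp hk) hi
    rw [Finset.prod_update_of_mem hi, Finset.prod_update_of_mem hi, Finset.prod_update_of_mem hi,
      hc, hc, hc]
    ring
  · have hR : ∀ s : ℝ, ∏ k ∈ R, Function.update y i s k = ∏ k ∈ R, y k := by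
      intro s
      refine Finset.prod_congr rfl fun k hk => ?_
      rw [Function.update_of_ne]
      rintro rfl
      exact hi hk
    have hic : i ∈ Rᶜ := Finset.mem_compl.mpr hi
    have hc : ∀ s : ℝ, ∏ k ∈ Rᶜ, (1 - Function.update y i s k)
        = (1 - s) * ∏ k ∈ Rᶜ \ {i}, (1 - y k) := by
      intro s
      have he : ∀ k, 1 - Function.update y i s k = Function.update (fun k => 1 - y k) i (1 - s) k := by
        intro k
        by_cases hk : k = i
        · subst hk; simp
        · rw [Function.update_of_ne hk, Function.update_of_ne hk]
      rw [Finset.prod_congr rfl (fun k _ => he k), Finset.prod_update_of_mem hic]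
    rw [hR, hR, hR, hc, hc, hc]
    ring

lemma mulExt_indicator (f : Finset U → ℝ) (z : U → ℝ) (hz : ∀ k, z k = 0 ∨ z k = 1) :
    mulExt f z = f (Finset.univ.filter fun k => z k = 1) := by
  unfold mulExt
  rw [Finset.sum_eq_single (Finset.univ.filter fun k => z k = 1)]
  · have h1 : (∏ k ∈ (Finset.univ.filter fun k => z k = 1), z k) = 1 := by
      apply Finset.prod_eq_one
      intro k hk
      exact (Finset.mem_filter.mp hk).2
    have h2 : (∏ k ∈ (Finset.univ.filter fun k => z k = 1)ᶜ, (1 - z k)) = 1 := by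
      apply Finset.prod_eq_one
      intro k hk
      have : ¬ z k = 1 := by
        intro h
        exact (Finset.mem_compl.mp hk) (Finset.mem_filter.mpr ⟨Finset.mem_univ k, h⟩)
      rcases hz k with h | h
      · rw [h]; ring
      · exact absurd h this
    rw [h1, h2]; ring
  · intro R _ hne
    by_cases hsub : ∀ k ∈ R, z k = 1
    · -- R ⊆ filter; since R ≠ filter, there is k in filter \ R, so k ∈ Rᶜ with z k = 1
      have hss : R ⊆ Finset.univ.filter fun k => z k = 1 := by
        intro k hk; exact Finset.mem_filter.mpr ⟨Finset.mem_univ k, hsub k hk⟩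
      obtain ⟨k, hkf, hkR⟩ := Finset.exists_of_ssubset (hss.ssubset_of_ne hne)
      have : (∏ k ∈ Rᶜ, (1 - z k)) = 0 := by
        apply Finset.prod_eq_zero (Finset.mem_compl.mpr hkR)
        rw [(Finset.mem_filter.mp hkf).2]; ring
      rw [this]; ring
    · push_neg at hsub
      obtain ⟨k, hkR, hk1⟩ := hsub
      have hk0 : z k = 0 := (hz k).resolve_right hk1
      rw [Finset.prod_eq_zero hkR hk0]
      ring
  · intro h
    exact absurd (Finset.mem_univ _) h

/-- bilinear expansion in two coordinates -/
lemma mulExt_bilin (f : Finset U → ℝ) (y : U → ℝ) {i j : U} (hij : i ≠ j) (a b : ℝ) :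
    mulExt f (Function.update (Function.update y i a) j b)
      = (1-a)*(1-b) * mulExt f (Function.update (Function.update y i 0) j 0)
      + (1-a)*b * mulExt f (Function.update (Function.update y i 0) j 1)
      + a*(1-b) * mulExt f (Function.update (Function.update y i 1) j 0)
      + a*b * mulExt f (Function.update (Function.update y i 1) j 1) := by
  rw [mulExt_update f (Function.update y i a) j b]
  rw [Function.update_comm hij a (0:ℝ) y, Function.update_comm hij a (1:ℝ) y]
  rw [mulExt_update f (Function.update y j 0) i a, mulExt_update f (Function.update y j 1) i a]
  rw [Function.update_comm hij.symm (0:ℝ) (0:ℝ) y, Function.update_comm hij.symm (0:ℝ) (1:ℝ) y,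
      Function.update_comm hij.symm (1:ℝ) (0:ℝ) y, Function.update_comm hij.symm (1:ℝ) (1:ℝ) y]
  ring

/-- corner (submodularity) inequality -/
lemma corner_le (f : Finset U → ℝ)
    (hf : ∀ S T : Finset U, f (S ∪ T) + f (S ∩ T) ≤ f S + f T)
    {i j : U} (hij : i ≠ j) :
    ∀ (S : Finset U) (y : U → ℝ), (∀ k, 0 ≤ y k ∧ y k ≤ 1) →
      (∀ k, k ∉ S → k = i ∨ k = j ∨ y k = 0 ∨ y k = 1) →
      mulExt f (Function.update (Function.update y i 1) j 1)
        + mulExt f (Function.update (Function.update y i 0) j 0)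
      ≤ mulExt f (Function.update (Function.update y i 1) j 0)
        + mulExt f (Function.update (Function.update y i 0) j 1) := by
  intro S
  induction S using Finset.induction_on with
  | empty =>
    intro y hy hout
    -- all coordinates other than i j are integral
    have hint : ∀ (a b : ℝ), (a = 0 ∨ a = 1) → (b = 0 ∨ b = 1) →
        ∀ k, (Function.update (Function.update y i a) j b) k = 0
          ∨ (Function.update (Function.update y i a) j b) k = 1 := by
      intro a b ha hb k
      by_cases hkj : k = j
      · subst hkj; rw [Function.update_self]; exact hb
      by_cases hki : k = i
      · subst hki; rw [Function.update_of_ne hkj, Function.update_self]; exact ha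
      · rw [Function.update_of_ne hkj, Function.update_of_ne hki]
        rcases hout k (Finset.notMem_empty k) with h | h | h | h
        · exact absurd h hki
        · exact absurd h hkj
        · exact Or.inl h
        · exact Or.inr h
    have e11 := mulExt_indicator f _ (hint 1 1 (Or.inr rfl) (Or.inr rfl))
    have e00 := mulExt_indicator f _ (hint 0 0 (Or.inl rfl) (Or.inl rfl))
    have e10 := mulExt_indicator f _ (hint 1 0 (Or.inr rfl) (Or.inl rfl))
    have e01 := mulExt_indicator f _ (hint 0 1 (Or.inl rfl) (Or.inr rfl))
    rw [e11, e00, e10, e01]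
    set S10 := Finset.univ.filter fun k => (Function.update (Function.update y i 1) j 0) k = 1 with hS10
    set S01 := Finset.univ.filter fun k => (Function.update (Function.update y i 0) j 1) k = 1 with hS01
    have hmem : ∀ (a b : ℝ) (k : U), (Function.update (Function.update y i a) j b) k =
        if k = j then b else if k = i then a else y k := by
      intro a b k
      by_cases hkj : k = j
      · subst hkj; rw [Function.update_self, if_pos rfl]
      by_cases hki : k = i
      · subst hki; rw [Function.update_of_ne hkj, Function.update_self, if_neg hkj, if_pos rfl]
      · rw [Function.update_of_ne hkj, Function.update_of_ne hki, if_neg hkj, if_neg hki]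
    have hunion : (Finset.univ.filter fun k => (Function.update (Function.update y i 1) j 1) k = 1)
        = S10 ∪ S01 := by
      ext k
      simp only [hS10, hS01, Finset.mem_union, Finset.mem_filter, Finset.mem_univ, true_and,
        hmem]
      by_cases hkj : k = j
      · simp [hkj]
      by_cases hki : k = i
      · simp [hkj, hki]; tauto
      · simp [hkj, hki]
    have hinter : (Finset.univ.filter fun k => (Function.update (Function.update y i 0) j 0) k = 1)
        = S10 ∩ S01 := by
      ext k
      simp only [hS10, hS01, Finset.mem_inter, Finset.mem_filter, Finset.mem_univ, true_and,
        hmem]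
      by_cases hkj : k = j
      · simp [hkj]
      by_cases hki : k = i
      · simp [hkj, hki]
      · simp [hkj, hki]
    rw [hunion, hinter]
    linarith [hf S10 S01]
  | @insert w S hwS IH =>
    intro y hy hout
    by_cases hwij : w = i ∨ w = j
    · refine IH y hy fun k hk => ?_
      by_cases hkw : k = w
      · subst hkw; rcases hwij with h | h
        · exact Or.inl h
        · exact Or.inr (Or.inl h)
      · exact hout k (by simp [Finset.mem_insert, hkw, hk])
    push_neg at hwij
    obtain ⟨hwi, hwj⟩ := hwij
    -- decompose at w
    have hdec : ∀ (a b : ℝ),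
        mulExt f (Function.update (Function.update y i a) j b)
        = (1 - y w) * mulExt f (Function.update (Function.update (Function.update y w 0) i a) j b)
        + y w * mulExt f (Function.update (Function.update (Function.update y w 1) i a) j b) := by
      intro a b
      have hw : (Function.update (Function.update y i a) j b) w = y w := by
        rw [Function.update_of_ne hwj, Function.update_of_ne hwi]
      have := mulExt_update f (Function.update (Function.update y i a) j b) w (y w)
      rw [show Function.update (Function.update (Function.update y i a) j b) w (y w)
            = Function.update (Function.update y i a) j b from by
          rw [← hw]; exact Function.update_eq_self w _] at this
      rw [this]
      have swap : ∀ (v : ℝ), Function.update (Function.update (Function.update y i a) j b) w v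
          = Function.update (Function.update (Function.update y w v) i a) j b := by
        intro v; funext k
        rcases eq_or_ne k w with rfl | hkw
        · rw [Function.update_self, Function.update_of_ne hwj, Function.update_of_ne hwi,
            Function.update_self]
        rcases eq_or_ne k j with rfl | hkj
        · rw [Function.update_of_ne hkw, Function.update_self, Function.update_self]
        rcases eq_or_ne k i with rfl | hki
        · rw [Function.update_of_ne hkw, Function.update_of_ne hkj, Function.update_self,
            Function.update_of_ne hkj, Function.update_self]
        · rw [Function.update_of_ne hkw, Function.update_of_ne hkj, Function.update_of_ne hki,
            Function.update_of_ne hkj, Function.update_of_ne hki, Function.update_of_ne hkw]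
      rw [swap 0, swap 1]
    have hbox0 : ∀ k, 0 ≤ (Function.update y w 0) k ∧ (Function.update y w 0) k ≤ 1 := by
      intro k; by_cases hk : k = w
      · subst hk; rw [Function.update_self]; norm_num
      · rw [Function.update_of_ne hk]; exact hy k
    have hbox1 : ∀ k, 0 ≤ (Function.update y w 1) k ∧ (Function.update y w 1) k ≤ 1 := by
      intro k; by_cases hk : k = w
      · subst hk; rw [Function.update_self]; norm_num
      · rw [Function.update_of_ne hk]; exact hy k
    have hout' : ∀ (v : ℝ), (v = 0 ∨ v = 1) → ∀ k, k ∉ S →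
        k = i ∨ k = j ∨ (Function.update y w v) k = 0 ∨ (Function.update y w v) k = 1 := by
      intro v hv k hk
      by_cases hkw : k = w
      · subst hkw; rw [Function.update_self]
        rcases hv with h | h
        · exact Or.inr (Or.inr (Or.inl h))
        · exact Or.inr (Or.inr (Or.inr h))
      · rw [Function.update_of_ne hkw]
        exact hout k (by simp [Finset.mem_insert, hkw, hk])
    have h0 := IH (Function.update y w 0) hbox0 (hout' 0 (Or.inl rfl))
    have h1 := IH (Function.update y w 1) hbox1 (hout' 1 (Or.inr rfl))
    have hyw0 : 0 ≤ y w := (hy w).1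
    have hyw1 : 0 ≤ 1 - y w := by linarith [(hy w).2]
    rw [hdec 1 1, hdec 0 0, hdec 1 0, hdec 0 1]
    nlinarith [mul_le_mul_of_nonneg_left h0 hyw1, mul_le_mul_of_nonneg_left h1 hyw0]


lemma corner_le' (f : Finset U → ℝ)
    (hf : ∀ S T : Finset U, f (S ∪ T) + f (S ∩ T) ≤ f S + f T)
    {i j : U} (hij : i ≠ j) (y : U → ℝ) (hy : ∀ k, 0 ≤ y k ∧ y k ≤ 1) :
    mulExt f (Function.update (Function.update y i 1) j 1)
      + mulExt f (Function.update (Function.update y i 0) j 0)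
    ≤ mulExt f (Function.update (Function.update y i 1) j 0)
      + mulExt f (Function.update (Function.update y i 0) j 1) :=
  corner_le f hf hij Finset.univ y hy (fun k hk => absurd (Finset.mem_univ k) hk)
/-- single-coordinate rounding -/
lemma round_single (f : Finset U → ℝ) (y : U → ℝ) (hy : ∀ k, 0 ≤ y k ∧ y k ≤ 1) (i : U) :
    ∃ b : ℝ, (b = 0 ∨ b = 1) ∧ mulExt f y ≤ mulExt f (Function.update y i b) := by
  have key : mulExt f y = (1 - y i) * mulExt f (Function.update y i 0)
      + y i * mulExt f (Function.update y i 1) := by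
    conv_lhs => rw [← Function.update_eq_self i y]
    exact mulExt_update f y i (y i)
  rcases le_total (mulExt f (Function.update y i 0)) (mulExt f (Function.update y i 1)) with h | h
  · refine ⟨1, Or.inr rfl, ?_⟩
    nlinarith [(hy i).1, (hy i).2]
  · refine ⟨0, Or.inl rfl, ?_⟩
    nlinarith [(hy i).1, (hy i).2]

/-- pipage merge of two fractional coordinates -/
lemma merge (f : Finset U → ℝ)
    (hf : ∀ S T : Finset U, f (S ∪ T) + f (S ∩ T) ≤ f S + f T)
    (y : U → ℝ) (hy : ∀ k, 0 ≤ y k ∧ y k ≤ 1) {i j : U} (hij : i ≠ j)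
    (hi : 0 < y i ∧ y i < 1) (hj : 0 < y j ∧ y j < 1) :
    ∃ y' : U → ℝ, (∀ k, 0 ≤ y' k ∧ y' k ≤ 1) ∧
      (∀ k, k ≠ i → k ≠ j → y' k = y k) ∧
      (y' i + y' j = y i + y j) ∧
      ((y' i = 0 ∨ y' i = 1) ∨ (y' j = 0 ∨ y' j = 1)) ∧
      mulExt f y ≤ mulExt f y' := by
  classical
  set a := y i with ha
  set b := y j with hb
  set q00 := mulExt f (Function.update (Function.update y i 0) j 0) with hq00
  set q01 := mulExt f (Function.update (Function.update y i 0) j 1) with hq01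
  set q10 := mulExt f (Function.update (Function.update y i 1) j 0) with hq10
  set q11 := mulExt f (Function.update (Function.update y i 1) j 1) with hq11
  have hqy : ∀ u v : ℝ, mulExt f (Function.update (Function.update y i u) j v)
      = (1-u)*(1-v)*q00 + (1-u)*v*q01 + u*(1-v)*q10 + u*v*q11 := fun u v => mulExt_bilin f y hij u v
  have hyq : mulExt f y = (1-a)*(1-b)*q00 + (1-a)*b*q01 + a*(1-b)*q10 + a*b*q11 := by
    have : y = Function.update (Function.update y i a) j b := by
      rw [ha, Function.update_eq_self]
      rw [hb]
      exact (Function.update_eq_self j y).symm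
    conv_lhs => rw [this]
    exact hqy a b
  have hS : q11 + q00 ≤ q10 + q01 := corner_le' f hf hij y hy
  set p := min (1 - a) b with hp
  set m := min a (1 - b) with hm
  have hp0 : 0 < p := lt_min (by linarith [hi.2]) hj.1
  have hm0 : 0 < m := lt_min hi.1 (by linarith [hj.2])
  set B := q10 + q01 - q11 - q00 with hB
  set β := q10 - q01 + (q11 - q10 - q01 + q00) * (b - a) with hβ
  have hval : ∀ t : ℝ, mulExt f (Function.update (Function.update y i (a+t)) j (b-t))
      = mulExt f y + t * β + t^2 * B := by
    intro t
    rw [hqy (a+t) (b-t), hyq, hβ, hB]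
    ring
  have hBnn : 0 ≤ B := by rw [hB]; linarith
  have key : mulExt f y ≤ mulExt f (Function.update (Function.update y i (a+p)) j (b-p))
      ∨ mulExt f y ≤ mulExt f (Function.update (Function.update y i (a-m)) j (b+m)) := by
    by_contra hcon
    push_neg at hcon
    obtain ⟨h1, h2⟩ := hcon
    rw [hval p] at h1
    have h2' : mulExt f (Function.update (Function.update y i (a + (-m))) j (b - (-m)))
        < mulExt f y := by
      rw [show a + (-m) = a - m by ring, show b - (-m) = b + m by ring]
      exact h2
    rw [hval (-m)] at h2'
    have e1 : p * β + p^2 * B < 0 := by linarith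
    have e2 : -m * β + m^2 * B < 0 := by linarith
    have c1 := mul_lt_mul_of_pos_left e1 hm0
    have c2 := mul_lt_mul_of_pos_left e2 hp0
    have h3 : 0 ≤ p * m * B * (p + m) :=
      mul_nonneg (mul_nonneg (mul_pos hp0 hm0).le hBnn) (by linarith)
    nlinarith [c1, c2, h3]
  have hbox : ∀ t : ℝ, 0 ≤ a + t → a + t ≤ 1 → 0 ≤ b - t → b - t ≤ 1 →
      ∀ k, 0 ≤ (Function.update (Function.update y i (a+t)) j (b-t)) k
        ∧ (Function.update (Function.update y i (a+t)) j (b-t)) k ≤ 1 := by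
    intro t h1 h2 h3 h4 k
    rcases eq_or_ne k j with rfl | hkj
    · rw [Function.update_self]; exact ⟨h3, h4⟩
    rcases eq_or_ne k i with rfl | hki
    · rw [Function.update_of_ne hkj, Function.update_self]; exact ⟨h1, h2⟩
    · rw [Function.update_of_ne hkj, Function.update_of_ne hki]; exact hy k
  have hvi : ∀ t (k : U), k ≠ i → k ≠ j →
      (Function.update (Function.update y i (a+t)) j (b-t)) k = y k := by
    intro t k hki hkj
    rw [Function.update_of_ne hkj, Function.update_of_ne hki]
  have hii : ∀ t, (Function.update (Function.update y i (a+t)) j (b-t)) i = a + t := by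
    intro t; rw [Function.update_of_ne hij, Function.update_self]
  have hjj : ∀ t, (Function.update (Function.update y i (a+t)) j (b-t)) j = b - t := by
    intro t; rw [Function.update_self]
  rcases key with hK | hK
  · refine ⟨_, hbox p (by linarith) ?_ ?_ (by linarith [hj.2]) , hvi p, ?_, ?_, hK⟩
    · have : p ≤ 1 - a := min_le_left _ _
      linarith
    · have : p ≤ b := min_le_right _ _
      linarith
    · rw [hii, hjj]; ring
    · rw [hii, hjj]
      rcases min_cases (1-a) b with ⟨h, _⟩ | ⟨h, _⟩
      · left; right; rw [hp, h]; ring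
      · right; left; rw [hp, h]; ring
  · have e1 : a + (-m) = a - m := by ring
    have e2 : b - (-m) = b + m := by ring
    rw [← e1, ← e2] at hK
    refine ⟨_, hbox (-m) ?_ (by linarith [hi.2]) (by linarith [hj.1]) ?_, hvi (-m), ?_, ?_, hK⟩
    · have : m ≤ a := min_le_left _ _
      linarith
    · have : m ≤ 1 - b := min_le_right _ _
      linarith
    · rw [hii, hjj]; ring
    · rw [hii, hjj]
      rcases min_cases a (1-b) with ⟨h, _⟩ | ⟨h, _⟩
      · left; left; rw [hm, h]; ring
      · right; right; rw [hm, h]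
        ring
/-- Phase 1: round all coordinates in S to {0,1}, losing at most ∑_{k∈S} w k in any
nonnegative linear budget. -/
lemma round_finset (f : Finset U → ℝ) (S : Finset U) :
    ∀ y : U → ℝ, (∀ k, 0 ≤ y k ∧ y k ≤ 1) →
    ∃ y' : U → ℝ, (∀ k, 0 ≤ y' k ∧ y' k ≤ 1) ∧
      (∀ k, k ∉ S → y' k = y k) ∧
      (∀ k ∈ S, y' k = 0 ∨ y' k = 1) ∧
      mulExt f y ≤ mulExt f y' ∧
      (∀ w : U → ℝ, (∀ k, 0 ≤ w k) →
        ∑ k, y' k * w k ≤ ∑ k, y k * w k + ∑ k ∈ S, w k) := by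
  induction S using Finset.induction_on with
  | empty =>
    intro y hy
    exact ⟨y, hy, fun _ _ => rfl, fun k hk => absurd hk (Finset.notMem_empty k), le_refl _,
      fun w hw => by simp⟩
  | @insert i S hiS IH =>
    intro y hy
    obtain ⟨b, hb, hF⟩ := round_single f y hy i
    set y₁ := Function.update y i b with hy₁
    have hbox1 : ∀ k, 0 ≤ y₁ k ∧ y₁ k ≤ 1 := by
      intro k
      rcases eq_or_ne k i with rfl | hk
      · rw [hy₁, Function.update_self]
        rcases hb with h | h <;> rw [h] <;> norm_num
      · rw [hy₁, Function.update_of_ne hk]; exact hy k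
    obtain ⟨y', hbox', hoff', hmem', hF', hbud'⟩ := IH y₁ hbox1
    refine ⟨y', hbox', ?_, ?_, le_trans hF hF', ?_⟩
    · intro k hk
      have hkS : k ∉ S := fun h => hk (Finset.mem_insert_of_mem h)
      have hki : k ≠ i := fun h => hk (h ▸ Finset.mem_insert_self i S)
      rw [hoff' k hkS, hy₁, Function.update_of_ne hki]
    · intro k hk
      rcases Finset.mem_insert.mp hk with rfl | hkS
      · rw [hoff' k hiS, hy₁, Function.update_self]; exact hb
      · exact hmem' k hkS
    · intro w hw
      have h1 := hbud' w hw
      have h2 : ∑ k, y₁ k * w k ≤ ∑ k, y k * w k + w i := by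
        have e : ∀ k, y₁ k * w k = Function.update (fun k => y k * w k) i (b * w i) k := by
          intro k
          rcases eq_or_ne k i with rfl | hk
          · rw [hy₁, Function.update_self, Function.update_self]
          · rw [hy₁, Function.update_of_ne hk, Function.update_of_ne hk]
        rw [Finset.sum_congr rfl fun k _ => e k, Finset.sum_update_of_mem (Finset.mem_univ i)]
        have e2 : ∑ k, y k * w k = y i * w i + ∑ k ∈ Finset.univ \ {i}, y k * w k := by
          rw [← Finset.sum_update_of_mem (Finset.mem_univ i), Finset.sum_congr rfl]
          intro k _
          rcases eq_or_ne k i with rfl | hk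
          · rw [Function.update_self]
          · rw [Function.update_of_ne hk]
        rw [e2]
        have hb1 : b ≤ 1 := by rcases hb with h | h <;> rw [h] <;> norm_num
        have := mul_nonneg (hy i).1 (hw i)
        have := mul_le_mul_of_nonneg_right hb1 (hw i)
        linarith
      rw [Finset.sum_insert hiS]
      linarith

/-- Phase 2: merge fractional coordinates with equal labels until all fractional labels
are distinct; preserves the sum of coordinates within each label class. -/
lemma merge_all {ι : Type} [DecidableEq ι] (κ : U → ι) (f : Finset U → ℝ)
    (hf : ∀ S T : Finset U, f (S ∪ T) + f (S ∩ T) ≤ f S + f T) :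
    ∀ (N : ℕ) (y : U → ℝ), (∀ k, 0 ≤ y k ∧ y k ≤ 1) →
      (Finset.univ.filter fun k => 0 < y k ∧ y k < 1).card ≤ N →
    ∃ y' : U → ℝ, (∀ k, 0 ≤ y' k ∧ y' k ≤ 1) ∧
      (∀ k, (y k = 0 ∨ y k = 1) → y' k = y k) ∧
      (∀ τ : ι, ∑ k ∈ Finset.univ.filter (fun k => κ k = τ), y' k
          = ∑ k ∈ Finset.univ.filter (fun k => κ k = τ), y k) ∧
      mulExt f y ≤ mulExt f y' ∧
      (∀ a b : U, a ≠ b → (0 < y' a ∧ y' a < 1) → (0 < y' b ∧ y' b < 1) → κ a ≠ κ b) := by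
  intro N
  induction N with
  | zero =>
    intro y hy hcard
    refine ⟨y, hy, fun _ _ => rfl, fun _ => rfl, le_refl _, ?_⟩
    intro a b hab ha hb
    exfalso
    have : a ∈ Finset.univ.filter fun k => 0 < y k ∧ y k < 1 :=
      Finset.mem_filter.mpr ⟨Finset.mem_univ a, ha⟩
    have := Finset.card_pos.mpr ⟨a, this⟩
    omega
  | succ N IH =>
    intro y hy hcard
    by_cases hex : ∃ a b : U, a ≠ b ∧ (0 < y a ∧ y a < 1) ∧ (0 < y b ∧ y b < 1) ∧ κ a = κ b
    · obtain ⟨a, b, hab, ha, hb, hk⟩ := hex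
      obtain ⟨y₁, hbox1, hoff1, hsum1, hint1, hF1⟩ := merge f hf y hy hab ha hb
      -- the integralized coordinate
      obtain ⟨w, hwab, hwint⟩ : ∃ w, (w = a ∨ w = b) ∧ (y₁ w = 0 ∨ y₁ w = 1) := by
        rcases hint1 with h | h
        · exact ⟨a, Or.inl rfl, h⟩
        · exact ⟨b, Or.inr rfl, h⟩
      have hwfrac : w ∈ Finset.univ.filter fun k => 0 < y k ∧ y k < 1 := by
        rcases hwab with rfl | rfl
        · exact Finset.mem_filter.mpr ⟨Finset.mem_univ _, ha⟩
        · exact Finset.mem_filter.mpr ⟨Finset.mem_univ _, hb⟩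
      have hsub : (Finset.univ.filter fun k => 0 < y₁ k ∧ y₁ k < 1)
          ⊆ (Finset.univ.filter fun k => 0 < y k ∧ y k < 1).erase w := by
        intro k hk
        obtain ⟨-, hkf⟩ := Finset.mem_filter.mp hk
        have hkw : k ≠ w := by
          rintro rfl
          rcases hwint with h | h <;> rw [h] at hkf <;> exact absurd hkf (by norm_num)
        refine Finset.mem_erase.mpr ⟨hkw, Finset.mem_filter.mpr ⟨Finset.mem_univ k, ?_⟩⟩
        rcases eq_or_ne k a with rfl | hka
        · exact ha
        rcases eq_or_ne k b with rfl | hkb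
        · exact hb
        · rw [← hoff1 k hka hkb]; exact hkf
      have hcard1 : (Finset.univ.filter fun k => 0 < y₁ k ∧ y₁ k < 1).card ≤ N := by
        have h1 := Finset.card_le_card hsub
        have h2 := Finset.card_erase_of_mem hwfrac
        have h3 := Finset.card_pos.mpr ⟨w, hwfrac⟩
        omega
      obtain ⟨y', hbox', hint', hsum', hF', hdist'⟩ := IH y₁ hbox1 hcard1
      refine ⟨y', hbox', ?_, ?_, le_trans hF1 hF', hdist'⟩
      · intro k hk
        have hka : k ≠ a := by
          intro h
          rw [h] at hk
          rcases hk with h' | h' <;> rw [h'] at ha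
          · exact lt_irrefl _ ha.1
          · exact lt_irrefl _ ha.2
        have hkb : k ≠ b := by
          intro h
          rw [h] at hk
          rcases hk with h' | h' <;> rw [h'] at hb
          · exact lt_irrefl _ hb.1
          · exact lt_irrefl _ hb.2
        rw [hint' k (by rw [hoff1 k hka hkb]; exact hk), hoff1 k hka hkb]
      · intro τ
        rw [hsum' τ]
        rcases eq_or_ne (κ a) τ with rfl | hτ
        · -- a and b both in this fiber
          have haf : a ∈ Finset.univ.filter fun k => κ k = κ a :=
            Finset.mem_filter.mpr ⟨Finset.mem_univ _, rfl⟩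
          have hbf : b ∈ Finset.univ.filter fun k => κ k = κ a :=
            Finset.mem_filter.mpr ⟨Finset.mem_univ _, hk.symm ▸ rfl⟩
          have hbf' : b ∈ (Finset.univ.filter fun k => κ k = κ a).erase a :=
            Finset.mem_erase.mpr ⟨hab.symm, hbf⟩
          rw [← Finset.add_sum_erase _ y₁ haf, ← Finset.add_sum_erase _ y haf,
            ← Finset.add_sum_erase _ y₁ hbf', ← Finset.add_sum_erase _ y hbf']
          have : ∑ k ∈ ((Finset.univ.filter fun k => κ k = κ a).erase a).erase b, y₁ k
              = ∑ k ∈ ((Finset.univ.filter fun k => κ k = κ a).erase a).erase b, y k := by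
            refine Finset.sum_congr rfl fun k hk' => ?_
            have h1 := Finset.mem_erase.mp hk'
            have h2 := Finset.mem_erase.mp h1.2
            exact hoff1 k h2.1 h1.1
          rw [this]
          linarith [hsum1]
        · refine Finset.sum_congr rfl fun k hk' => ?_
          have hkk := (Finset.mem_filter.mp hk').2
          have hka : k ≠ a := by rintro rfl; exact hτ hkk
          have hkb : k ≠ b := by rintro rfl; rw [← hk] at hkk; exact hτ hkk
          exact hoff1 k hka hkb
    · push_neg at hex
      refine ⟨y, hy, fun _ _ => rfl, fun _ => rfl, le_refl _, ?_⟩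
      intro a b hab ha hb
      exact hex a b hab ha hb


lemma le_pow_ceil (δ A : ℝ) (hδ : 0 < δ) (hA : 0 < A) :
    A ≤ (1+δ) ^ (⌈Real.log A / Real.log (1+δ)⌉₊) := by
  have h1 : (0:ℝ) < 1 + δ := by linarith
  have hlog : 0 < Real.log (1+δ) := Real.log_pos (by linarith)
  have h2 : Real.log A ≤ (⌈Real.log A / Real.log (1+δ)⌉₊ : ℝ) * Real.log (1+δ) := by
    have h := Nat.le_ceil (Real.log A / Real.log (1+δ))
    have := mul_le_mul_of_nonneg_right h hlog.le
    rwa [div_mul_cancel₀ _ hlog.ne'] at this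
  calc A = Real.exp (Real.log A) := (Real.exp_log hA).symm
  _ ≤ Real.exp ((⌈Real.log A / Real.log (1+δ)⌉₊ : ℝ) * Real.log (1+δ)) := Real.exp_le_exp.mpr h2
  _ = (1+δ) ^ (⌈Real.log A / Real.log (1+δ)⌉₊) := by
      rw [← Real.log_pow, Real.exp_log (pow_pos h1 _)]

lemma pow_le_of_ceil_ge (δ B u : ℝ) (k : ℕ) (hδ : 0 < δ) (hu : 0 < u) (hB : 0 < B)
    (h1k : 1 ≤ k) (hk : k ≤ ⌈Real.log (B/u) / Real.log (1+δ)⌉₊) :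
    u * (1+δ)^(k-1) ≤ B := by
  have h1 : (0:ℝ) < 1 + δ := by linarith
  have hlog : 0 < Real.log (1+δ) := Real.log_pos (by linarith)
  have hlt : ((k-1:ℕ) : ℝ) < Real.log (B/u) / Real.log (1+δ) := by
    have h : (k-1:ℕ) < ⌈Real.log (B/u) / Real.log (1+δ)⌉₊ := by omega
    exact_mod_cast Nat.lt_ceil.mp h
  have h2 : ((k-1:ℕ):ℝ) * Real.log (1+δ) < Real.log (B/u) := by
    have := mul_lt_mul_of_pos_right hlt hlog
    rwa [div_mul_cancel₀ _ hlog.ne'] at this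
  have h3 : (1+δ)^(k-1) < B/u := by
    calc (1+δ)^(k-1) = Real.exp (((k-1:ℕ):ℝ) * Real.log (1+δ)) := by
          rw [← Real.log_pow, Real.exp_log (pow_pos h1 _)]
    _ < Real.exp (Real.log (B/u)) := Real.exp_lt_exp.mpr h2
    _ = B/u := Real.exp_log (div_pos hB hu)
  have := mul_le_mul_of_nonneg_left h3.le hu.le
  rwa [mul_div_cancel₀ _ hu.ne'] at this

lemma close_of_ceil_eq (δ B u v : ℝ) (hδ : 0 < δ) (hu : 0 < u) (hv : 0 < v) (huB : u ≤ B)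
    (h : ⌈Real.log (B/u) / Real.log (1+δ)⌉₊ = ⌈Real.log (B/v) / Real.log (1+δ)⌉₊) :
    u ≤ (1+δ) * v := by
  have hB : 0 < B := lt_of_lt_of_le hu huB
  have h1p : (0:ℝ) < 1 + δ := by linarith
  have hlog : 0 < Real.log (1+δ) := Real.log_pos (by linarith)
  have hx0 : 0 ≤ Real.log (B/u) / Real.log (1+δ) := by
    apply div_nonneg _ hlog.le
    apply Real.log_nonneg
    rw [le_div_iff₀ hu]; linarith
  have hxv : Real.log (B/v) / Real.log (1+δ) ≤ (⌈Real.log (B/u) / Real.log (1+δ)⌉₊ : ℝ) := by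
    rw [h]; exact Nat.le_ceil _
  have hxu : (⌈Real.log (B/u) / Real.log (1+δ)⌉₊ : ℝ) < Real.log (B/u) / Real.log (1+δ) + 1 :=
    Nat.ceil_lt_add_one hx0
  have h3 : Real.log (B/v) < Real.log (B/u) + Real.log (1+δ) := by
    have hlt := lt_of_le_of_lt hxv hxu
    have := mul_lt_mul_of_pos_right hlt hlog
    rw [div_mul_cancel₀ _ hlog.ne', add_mul, div_mul_cancel₀ _ hlog.ne', one_mul] at this
    exact this
  have h4 : B/v < B/u * (1+δ) := by
    calc B/v = Real.exp (Real.log (B/v)) := (Real.exp_log (div_pos hB hv)).symm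
    _ < Real.exp (Real.log (B/u) + Real.log (1+δ)) := Real.exp_lt_exp.mpr h3
    _ = B/u * (1+δ) := by rw [Real.exp_add, Real.exp_log (div_pos hB hu), Real.exp_log h1p]
  rw [div_mul_eq_mul_div, div_lt_div_iff₀ hv hu] at h4
  -- h4 : B * u < B * (1+δ) * v
  nlinarith [h4]


end RedLog

set_option maxHeartbeats 2000000 in
open RedLog in
theorem reduce_to_logarithmically_many_fractional_entries
    (d : ℕ) (hd : 1 ≤ d) (ε : ℝ) (hε : 0 < ε) (hε1 : ε < 1) :
    ∃ C : ℝ, 0 < C ∧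
      ∀ (U : Type) [Fintype U] [DecidableEq U],
        2 ≤ Fintype.card U →
      ∀ (f : Finset U → ℝ),
        (∀ S T : Finset U, f (S ∪ T) + f (S ∩ T) ≤ f S + f T) →
      ∀ (c : U → Fin d → ℝ) (L : Fin d → ℝ), (∀ r, 0 < L r) →
        (∀ (i : U) (r : Fin d), 0 ≤ c i r ∧ c i r ≤ ε ^ 3 * L r) →
      ∀ (x : U → ℝ), (∀ i, 0 ≤ x i ∧ x i ≤ 1) →
        (∀ r, ∑ i : U, x i * c i r ≤ L r) →
        ∃ x' : U → ℝ, (∀ i, 0 ≤ x' i ∧ x' i ≤ 1) ∧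
          ((Finset.univ.filter fun i : U => 0 < x' i ∧ x' i < 1).card : ℝ)
            ≤ C * Real.log (Fintype.card U) ∧
          (∀ r, ∑ i : U, x' i * c i r ≤ (1 + ε) ^ 2 * L r) ∧
          mulExt f x ≤ mulExt f x' := by
  classical
  set δ : ℝ := ε/8 with hδdef
  have hδ0 : 0 < δ := by positivity
  have hδ1 : (1:ℝ) < 1 + δ := by linarith
  have h1δ0 : (0:ℝ) < 1 + δ := by linarith
  have hlogδ : 0 < Real.log (1+δ) := Real.log_pos hδ1
  have hlog2 : 0 < Real.log 2 := Real.log_pos (by norm_num)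
  have hd1 : (1:ℝ) ≤ (d:ℝ) := by exact_mod_cast hd
  set W : ℕ := ⌈Real.log (8*d/ε) / Real.log (1+δ)⌉₊ + 1 with hWdef
  have hW1 : 1 ≤ W := by omega
  have hW : (8*d:ℝ)/ε ≤ (1+δ)^(W-1) := by
    have he : W - 1 = ⌈Real.log (8*d/ε) / Real.log (1+δ)⌉₊ := by omega
    rw [he]
    exact le_pow_ceil δ _ hδ0 (by positivity)
  have hpowW : (0:ℝ) < (1+δ)^(W-1) := pow_pos h1δ0 _
  set Bc : ℝ := (Real.log 8 / Real.log 2 + 1) / Real.log (1+δ) + 2 / Real.log 2 with hBcdef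
  have hlog8 : 0 < Real.log 8 := Real.log_pos (by norm_num)
  have hBc : 0 < Bc := by positivity
  refine ⟨Bc * (((W+1)^d : ℕ) : ℝ), by positivity, ?_⟩
  intro U _ _ hcardU f hf c L hL hc x hx hbud
  set n := Fintype.card U with hn
  have hn2 : 2 ≤ n := hcardU
  have hn2' : (2:ℝ) ≤ (n:ℝ) := by exact_mod_cast hn2
  have hn0 : (0:ℝ) < (n:ℝ) := by linarith
  have hlogn : Real.log 2 ≤ Real.log n := by
    apply Real.log_le_log (by norm_num)
    exact_mod_cast hn2
  have hlogn0 : 0 < Real.log n := lt_of_lt_of_le hlog2 hlogn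
  set K : ℕ := ⌈Real.log (8*n) / Real.log (1+δ)⌉₊ + 1 with hKdef
  have hK1 : 1 ≤ K := by omega
  have hK : (8*(n:ℝ)) ≤ (1+δ)^(K-1) := by
    have he : K - 1 = ⌈Real.log (8*n) / Real.log (1+δ)⌉₊ := by omega
    rw [he]
    exact le_pow_ceil δ _ hδ0 (by nlinarith [hn0])
  have hpowK : (0:ℝ) < (1+δ)^(K-1) := pow_pos h1δ0 _
  have hKlog : (K:ℝ) ≤ Bc * Real.log n := by
    have h0 : 0 ≤ Real.log (8*(n:ℝ)) / Real.log (1+δ) := by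
      apply div_nonneg _ hlogδ.le
      apply Real.log_nonneg
      nlinarith [hn2']
    have h1 : (K:ℝ) ≤ Real.log (8*n) / Real.log (1+δ) + 2 := by
      have h := Nat.ceil_lt_add_one h0
      rw [hKdef]
      push_cast
      linarith
    have h2 : Real.log (8*(n:ℝ)) = Real.log 8 + Real.log n :=
      Real.log_mul (by norm_num) (ne_of_gt hn0)
    have hr : 1 ≤ Real.log n / Real.log 2 := by
      rw [le_div_iff₀ hlog2]; linarith
    have p1 : Real.log 8 ≤ Real.log 8 * (Real.log n / Real.log 2) := by nlinarith
    have p2 : (2:ℝ) ≤ 2 * (Real.log n / Real.log 2) := by nlinarith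
    have h3 : Real.log (8*(n:ℝ)) / Real.log (1+δ)
        ≤ (Real.log 8 * (Real.log n / Real.log 2) + Real.log n) / Real.log (1+δ) := by
      apply div_le_div_of_nonneg_right _ hlogδ.le
      rw [h2]; linarith
    have h4 : Bc * Real.log n
        = (Real.log 8 * (Real.log n / Real.log 2) + Real.log n) / Real.log (1+δ)
          + 2 * (Real.log n / Real.log 2) := by
      rw [hBcdef]
      ring
    calc (K:ℝ) ≤ Real.log (8*n) / Real.log (1+δ) + 2 := h1
    _ ≤ (Real.log 8 * (Real.log n / Real.log 2) + Real.log n) / Real.log (1+δ) + 2 :=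
        by linarith [h3]
    _ ≤ (Real.log 8 * (Real.log n / Real.log 2) + Real.log n) / Real.log (1+δ)
          + 2 * (Real.log n / Real.log 2) := by linarith [p2]
    _ = Bc * Real.log n := h4.symm
  -- class machinery
  have hrne : (Finset.univ : Finset (Fin d)).Nonempty := ⟨⟨0, hd⟩, Finset.mem_univ _⟩
  set cls : Fin d → U → ℕ := fun r i =>
    if c i r ≤ 0 then K + W else ⌈Real.log (ε^3 * L r / c i r) / Real.log (1+δ)⌉₊ with hclsdef
  set mm : U → ℕ := fun i => Finset.univ.inf' hrne (fun r => cls r i) with hmmdef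
  set offc : Fin d → U → ℕ := fun r i => min (cls r i - mm i) W with hoffdef
  set κ : U → ℕ × (Fin d → ℕ) := fun i => (mm i, fun r => offc r i) with hκdef
  have hmle : ∀ (i : U) (r : Fin d), mm i ≤ cls r i := by
    intro i r
    simp only [hmmdef]
    exact Finset.inf'_le _ (Finset.mem_univ r)
  have hmex : ∀ i : U, ∃ r, cls r i = mm i := by
    intro i
    obtain ⟨r, -, hr⟩ := Finset.exists_mem_eq_inf' hrne (fun r => cls r i)
    refine ⟨r, ?_⟩
    simp only [hmmdef]
    exact hr.symm
  have hcposK : ∀ (i : U) (r : Fin d), cls r i < K + W → 0 < c i r := by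
    intro i r h
    by_contra h0
    push_neg at h0
    simp only [hclsdef, if_pos h0] at h
    omega
  have P2 : ∀ (i : U) (r : Fin d) (k : ℕ), 1 ≤ k → k ≤ cls r i →
      c i r * (1+δ)^(k-1) ≤ ε^3 * L r := by
    intro i r k hk1 hkc
    rcases le_or_gt (c i r) 0 with h0 | h0
    · have hc0 : c i r = 0 := le_antisymm h0 (hc i r).1
      rw [hc0, zero_mul]
      have := hL r
      positivity
    · have he : cls r i = ⌈Real.log (ε^3 * L r / c i r) / Real.log (1+δ)⌉₊ := by
        rw [hclsdef]; simp only [if_neg (not_le.mpr h0)]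
      rw [he] at hkc
      have hB : (0:ℝ) < ε^3 * L r := by have := hL r; positivity
      exact pow_le_of_ceil_ge δ _ _ k hδ0 h0 hB hk1 hkc
  have P3 : ∀ i : U, mm i < K → ∃ r, ε^3 * L r ≤ c i r * (1+δ)^(mm i) := by
    intro i hmi
    obtain ⟨r, hr⟩ := hmex i
    have hcr : 0 < c i r := hcposK i r (by omega)
    refine ⟨r, ?_⟩
    have he : cls r i = ⌈Real.log (ε^3 * L r / c i r) / Real.log (1+δ)⌉₊ := by
      simp only [hclsdef, if_neg (not_le.mpr hcr)]
    have hA : (0:ℝ) < ε^3 * L r / c i r := by have := hL r; positivity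
    have h1 := le_pow_ceil δ (ε^3 * L r / c i r) hδ0 hA
    rw [← he, hr] at h1
    rw [div_le_iff₀ hcr] at h1
    exact h1.trans_eq (mul_comm _ _)
  have P4 : ∀ i j : U, κ i = κ j → mm i < K → ∀ r : Fin d,
      c i r ≤ (1+δ) * c j r + ε^3 * L r / (1+δ)^(mm i + (W-1)) := by
    intro i j hκij hmi r
    have hmeq : mm i = mm j := congrArg Prod.fst hκij
    have hoeq : offc r i = offc r j := congrArg (fun p : ℕ × (Fin d → ℕ) => p.2 r) hκij
    have hE0 : 0 ≤ ε^3 * L r / (1+δ)^(mm i + (W-1)) := by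
      have := hL r; positivity
    have hoi : offc r i = min (cls r i - mm i) W := by simp only [hoffdef]
    have hoj : offc r j = min (cls r j - mm j) W := by simp only [hoffdef]
    rcases lt_or_ge (offc r i) W with ho | ho
    · have hclsi : cls r i = mm i + offc r i := by
        have h1 := hmle i r
        omega
      have hclsj : cls r j = mm j + offc r j := by
        have h1 := hmle j r
        omega
      have hci : 0 < c i r := hcposK i r (by omega)
      have hcj : 0 < c j r := hcposK j r (by omega)
      have hceq : cls r i = cls r j := by omega
      have e1 : cls r i = ⌈Real.log (ε^3 * L r / c i r) / Real.log (1+δ)⌉₊ := by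
        simp only [hclsdef, if_neg (not_le.mpr hci)]
      have e2 : cls r j = ⌈Real.log (ε^3 * L r / c j r) / Real.log (1+δ)⌉₊ := by
        simp only [hclsdef, if_neg (not_le.mpr hcj)]
      have hclose := close_of_ceil_eq δ (ε^3 * L r) (c i r) (c j r) hδ0 hci hcj (hc i r).2
        (by rw [← e1, ← e2, hceq])
      exact hclose.trans (le_add_of_nonneg_right hE0)
    · have hge : mm i + W ≤ cls r i := by
        have h1 := hmle i r
        omega
      have h2 := P2 i r (mm i + W) (by omega) hge
      have hexp : mm i + W - 1 = mm i + (W-1) := by omega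
      rw [hexp] at h2
      have h3 : c i r ≤ ε^3 * L r / (1+δ)^(mm i + (W-1)) := by
        rw [le_div_iff₀ (pow_pos h1δ0 _)]
        exact h2
      have h4 : 0 ≤ (1+δ) * c j r := mul_nonneg h1δ0.le (hc j r).1
      exact h3.trans (le_add_of_nonneg_left h4)
  have hTiny : ∀ i : U, K ≤ mm i → ∀ r : Fin d, c i r ≤ ε^3 * L r / (1+δ)^(K-1) := by
    intro i hi r
    have h2 := P2 i r K hK1 (le_trans hi (hmle i r))
    rw [le_div_iff₀ hpowK]
    exact h2
  -- Phase 1 : round tiny coordinates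
  set S : Finset U := Finset.univ.filter (fun i => K ≤ mm i) with hSdef
  obtain ⟨y₁, hbox1, hoff1, hint1, hF1, hbud1⟩ := round_finset f S x hx
  have hbud1' : ∀ r, ∑ i, y₁ i * c i r ≤ (1 + ε/8) * L r := by
    intro r
    have hLr0 := hL r
    have h1 := hbud1 (fun i => c i r) (fun i => (hc i r).1)
    have h2 : ∑ i ∈ S, c i r ≤ (ε/8) * L r := by
      have h3 : ∀ i ∈ S, c i r ≤ ε^3 * L r / (1+δ)^(K-1) := by
        intro i hi
        exact hTiny i ((Finset.mem_filter.mp hi).2) r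
      have h4 : ∑ i ∈ S, c i r ≤ (S.card : ℝ) * (ε^3 * L r / (1+δ)^(K-1)) := by
        calc ∑ i ∈ S, c i r ≤ ∑ _i ∈ S, ε^3 * L r / (1+δ)^(K-1) := Finset.sum_le_sum h3
        _ = (S.card : ℝ) * (ε^3 * L r / (1+δ)^(K-1)) := by
            rw [Finset.sum_const, nsmul_eq_mul]
      have hcard : (S.card : ℝ) ≤ (n:ℝ) := by
        have : S.card ≤ n := by
          rw [hn]
          exact le_trans (Finset.card_filter_le _ _) (le_of_eq Finset.card_univ)
        exact_mod_cast this
      have h5 : (S.card : ℝ) * (ε^3 * L r / (1+δ)^(K-1)) ≤ (n:ℝ) * (ε^3 * L r / (1+δ)^(K-1)) := by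
        apply mul_le_mul_of_nonneg_right hcard
        have := hL r
        positivity
      have h6 : (n:ℝ) * (ε^3 * L r / (1+δ)^(K-1)) ≤ (n:ℝ) * (ε^3 * L r / (8*n)) := by
        apply mul_le_mul_of_nonneg_left _ hn0.le
        apply div_le_div_of_nonneg_left _ _ hK
        · have := hL r; positivity
        · nlinarith [hn0]
      have h7 : (n:ℝ) * (ε^3 * L r / (8*n)) = ε^3 * L r / 8 := by
        field_simp
      have h8 : ε^3 * L r / 8 ≤ (ε/8) * L r := by
        have h9 : ε^3 ≤ ε := by
          nlinarith [mul_pos (mul_pos hε (show 0 < 1 - ε by linarith))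
            (show 0 < 1 + ε by linarith)]
        have h10 := mul_le_mul_of_nonneg_right h9 hLr0.le
        linarith
      calc ∑ i ∈ S, c i r ≤ (S.card : ℝ) * (ε^3 * L r / (1+δ)^(K-1)) := h4
      _ ≤ (n:ℝ) * (ε^3 * L r / (1+δ)^(K-1)) := h5
      _ ≤ (n:ℝ) * (ε^3 * L r / (8*n)) := h6
      _ = ε^3 * L r / 8 := h7
      _ ≤ (ε/8) * L r := h8
    have hsum := hbud r
    calc ∑ i, y₁ i * c i r ≤ ∑ i, x i * c i r + ∑ i ∈ S, c i r := h1
    _ ≤ L r + (ε/8) * L r := add_le_add hsum h2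
    _ = (1+ε/8) * L r := by ring
  -- Phase 2 : merge equal-type fractional coordinates
  obtain ⟨x', hbox', hint', hsum', hF', hdist'⟩ :=
    merge_all κ f hf (Finset.univ.filter fun k => 0 < y₁ k ∧ y₁ k < 1).card y₁ hbox1 le_rfl
  have hxS : ∀ i : U, K ≤ mm i → x' i = y₁ i := by
    intro i hi
    exact hint' i (hint1 i (Finset.mem_filter.mpr ⟨Finset.mem_univ _, hi⟩))
  refine ⟨x', hbox', ?_, ?_, le_trans hF1 hF'⟩
  · -- count
    set Fr := Finset.univ.filter (fun i : U => 0 < x' i ∧ x' i < 1) with hFrdef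
    have hFrA : ∀ i ∈ Fr, mm i < K := by
      intro i hi
      by_contra hcon
      push_neg at hcon
      have hxi : x' i = y₁ i := hxS i hcon
      have hyi := hint1 i (Finset.mem_filter.mpr ⟨Finset.mem_univ _, hcon⟩)
      have hfr := (Finset.mem_filter.mp hi).2
      rcases hyi with h | h
      · rw [hxi, h] at hfr
        exact lt_irrefl _ hfr.1
      · rw [hxi, h] at hfr
        exact lt_irrefl _ hfr.2
    have hinj : Set.InjOn κ (Fr : Set U) := by
      intro a ha b hb hab
      by_contra hne
      exact hdist' a b hne (Finset.mem_filter.mp (Finset.mem_coe.mp ha)).2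
        (Finset.mem_filter.mp (Finset.mem_coe.mp hb)).2 hab
    have hmaps : ∀ i ∈ Fr, κ i ∈
        (Finset.range K) ×ˢ (Fintype.piFinset fun _ : Fin d => Finset.range (W+1)) := by
      intro i hi
      rw [Finset.mem_product]
      constructor
      · simp only [hκdef]
        exact Finset.mem_range.mpr (hFrA i hi)
      · simp only [hκdef]
        refine Fintype.mem_piFinset.mpr fun r => Finset.mem_range.mpr ?_
        simp only [hoffdef]
        omega
    have hcount := Finset.card_le_card_of_injOn κ hmaps hinj
    have hcardT : ((Finset.range K) ×ˢ (Fintype.piFinset fun _ : Fin d => Finset.range (W+1))).card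
        = K * (W+1)^d := by
      rw [Finset.card_product, Finset.card_range, Fintype.card_piFinset]
      simp
    rw [hcardT] at hcount
    calc ((Fr.card : ℕ) : ℝ) ≤ ((K * (W+1)^d : ℕ) : ℝ) := by exact_mod_cast hcount
    _ = (K:ℝ) * (((W+1)^d : ℕ) : ℝ) := by push_cast; ring
    _ ≤ (Bc * Real.log n) * (((W+1)^d : ℕ) : ℝ) := by
        apply mul_le_mul_of_nonneg_right hKlog (by positivity)
    _ = Bc * (((W+1)^d : ℕ) : ℝ) * Real.log n := by ring
  · -- budgets
    intro r
    have hLr := hL r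
    set A := Finset.univ.filter (fun i : U => mm i < K) with hAdef
    have hsplit : ∑ i, x' i * c i r
        = ∑ i ∈ A, x' i * c i r
        + ∑ i ∈ Finset.univ.filter (fun i => ¬ mm i < K), x' i * c i r := by
      rw [hAdef]
      exact (Finset.sum_filter_add_sum_filter_not _ _ _).symm
    have hSpart : ∑ i ∈ Finset.univ.filter (fun i : U => ¬ mm i < K), x' i * c i r
        = ∑ i ∈ Finset.univ.filter (fun i : U => ¬ mm i < K), y₁ i * c i r := by
      refine Finset.sum_congr rfl fun i hi => ?_
      rw [hxS i (not_lt.mp (Finset.mem_filter.mp hi).2)]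
    -- fiberwise bound
    have hfiber : ∑ i ∈ A, x' i * c i r
        ≤ ∑ i ∈ A, y₁ i * ((1+δ) * c i r + ε^3 * L r / (1+δ)^(mm i + (W-1))) := by
      have hmapsA : ∀ i ∈ A, κ i ∈ A.image κ := fun i hi => Finset.mem_image_of_mem κ hi
      rw [← Finset.sum_fiberwise_of_maps_to hmapsA (fun i => x' i * c i r),
          ← Finset.sum_fiberwise_of_maps_to hmapsA
            (fun i => y₁ i * ((1+δ) * c i r + ε^3 * L r / (1+δ)^(mm i + (W-1))))]
      apply Finset.sum_le_sum
      intro τ hτ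
      set B := A.filter (fun i => κ i = τ) with hBdef
      have hBglob : B = Finset.univ.filter (fun i => κ i = τ) := by
        obtain ⟨i₀, hi₀A, hi₀κ⟩ := Finset.mem_image.mp hτ
        have hmi₀ : mm i₀ < K := (Finset.mem_filter.mp hi₀A).2
        ext i
        simp only [hBdef, hAdef, Finset.mem_filter, Finset.mem_univ, true_and]
        constructor
        · rintro ⟨-, h⟩; exact h
        · intro h
          refine ⟨?_, h⟩
          have h1 : mm i = τ.1 := by rw [show τ = κ i from h.symm]
          have h2 : mm i₀ = τ.1 := by rw [show τ = κ i₀ from hi₀κ.symm]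
          omega
      rcases Finset.eq_empty_or_nonempty B with hBe | hBne
      · rw [hBe]
        simp
      · obtain ⟨i₀, hi₀B, hmax⟩ := Finset.exists_max_image B (fun i => c i r) hBne
        have hsumB : ∑ i ∈ B, x' i = ∑ i ∈ B, y₁ i := by
          rw [hBglob]
          exact hsum' τ
        have hκτ : ∀ i ∈ B, κ i = τ := fun i hi => (Finset.mem_filter.mp hi).2
        have hmmK : ∀ i ∈ B, mm i < K := fun i hi =>
          (Finset.mem_filter.mp (Finset.mem_filter.mp hi).1).2
        calc ∑ i ∈ B, x' i * c i r ≤ ∑ i ∈ B, x' i * c i₀ r := by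
              apply Finset.sum_le_sum
              intro i hi
              exact mul_le_mul_of_nonneg_left (hmax i hi) (hbox' i).1
        _ = (∑ i ∈ B, x' i) * c i₀ r := by rw [Finset.sum_mul]
        _ = (∑ i ∈ B, y₁ i) * c i₀ r := by rw [hsumB]
        _ = ∑ i ∈ B, y₁ i * c i₀ r := by rw [Finset.sum_mul]
        _ ≤ ∑ i ∈ B, y₁ i * ((1+δ) * c i r + ε^3 * L r / (1+δ)^(mm i + (W-1))) := by
            apply Finset.sum_le_sum
            intro i hi
            apply mul_le_mul_of_nonneg_left _ (hbox1 i).1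
            have hκeq : κ i₀ = κ i := by rw [hκτ i₀ hi₀B, hκτ i hi]
            have h := P4 i₀ i hκeq (hmmK i₀ hi₀B) r
            have hmmi : mm i₀ = mm i := congrArg Prod.fst hκeq
            rwa [hmmi] at h
    -- E-part bound
    have hE : ∑ i ∈ A, y₁ i * (ε^3 * L r / (1+δ)^(mm i + (W-1)))
        ≤ (ε/8) * (1+ε/8) * L r := by
      have hptw : ∀ i ∈ A, y₁ i * (ε^3 * L r / (1+δ)^(mm i + (W-1)))
          ≤ y₁ i * ((∑ s, c i s / L s) * (L r / (1+δ)^(W-1))) := by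
        intro i hi
        apply mul_le_mul_of_nonneg_left _ (hbox1 i).1
        obtain ⟨r', hr'⟩ := P3 i (Finset.mem_filter.mp hi).2
        have hLr' := hL r'
        have h1 : ε^3 / (1+δ)^(mm i) ≤ c i r' / L r' := by
          rw [div_le_div_iff₀ (pow_pos h1δ0 _) hLr']
          nlinarith [hr']
        have h2 : c i r' / L r' ≤ ∑ s, c i s / L s :=
          Finset.single_le_sum (f := fun s => c i s / L s)
            (fun s _ => div_nonneg (hc i s).1 (hL s).le) (Finset.mem_univ r')
        have hexp : (1+δ:ℝ)^(mm i + (W-1)) = (1+δ)^(mm i) * (1+δ)^(W-1) := pow_add _ _ _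
        calc ε^3 * L r / (1+δ)^(mm i + (W-1))
            = (ε^3/(1+δ)^(mm i)) * (L r/(1+δ)^(W-1)) := by
              rw [hexp, mul_div_mul_comm]
        _ ≤ (c i r'/L r') * (L r/(1+δ)^(W-1)) := by
            apply mul_le_mul_of_nonneg_right h1
            positivity
        _ ≤ (∑ s, c i s / L s) * (L r/(1+δ)^(W-1)) := by
            apply mul_le_mul_of_nonneg_right h2
            positivity
      have hstep1 : ∑ i ∈ A, y₁ i * (ε^3 * L r / (1+δ)^(mm i + (W-1)))
          ≤ ∑ i ∈ A, y₁ i * ((∑ s, c i s / L s) * (L r / (1+δ)^(W-1))) :=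
        Finset.sum_le_sum hptw
      have hstep2 : ∑ i ∈ A, y₁ i * ((∑ s, c i s / L s) * (L r / (1+δ)^(W-1)))
          ≤ ∑ i, y₁ i * ((∑ s, c i s / L s) * (L r / (1+δ)^(W-1))) := by
        apply Finset.sum_le_sum_of_subset_of_nonneg (Finset.filter_subset _ _)
        intro i _ _
        apply mul_nonneg (hbox1 i).1
        apply mul_nonneg
        · apply Finset.sum_nonneg
          intro s _
          exact div_nonneg (hc i s).1 (hL s).le
        · positivity
      have hd0 : (d:ℝ) ≠ 0 := by positivity
      have hswap0 : (∑ i, y₁ i * (∑ s, c i s / L s)) = ∑ s, (∑ i, y₁ i * c i s) / L s := by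
        calc ∑ i, y₁ i * (∑ s, c i s / L s) = ∑ i, ∑ s, y₁ i * (c i s / L s) := by
              refine Finset.sum_congr rfl fun i _ => Finset.mul_sum _ _ _
        _ = ∑ s, ∑ i, y₁ i * (c i s / L s) := Finset.sum_comm
        _ = ∑ s, (∑ i, y₁ i * c i s) / L s := by
              refine Finset.sum_congr rfl fun s _ => ?_
              rw [Finset.sum_div]
              refine Finset.sum_congr rfl fun i _ => (mul_div_assoc _ _ _).symm
      have hstep3 : ∑ i, y₁ i * ((∑ s, c i s / L s) * (L r / (1+δ)^(W-1)))
          = (∑ s, (∑ i, y₁ i * c i s) / L s) * (L r / (1+δ)^(W-1)) := by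
        rw [← hswap0, Finset.sum_mul]
        refine Finset.sum_congr rfl fun i _ => (mul_assoc _ _ _).symm
      have hstep4 : (∑ s, (∑ i, y₁ i * c i s) / L s) ≤ ∑ _s : Fin d, (1+ε/8) := by
        apply Finset.sum_le_sum
        intro s _
        rw [div_le_iff₀ (hL s)]
        exact hbud1' s
      have hstep5 : (∑ _s : Fin d, (1+ε/8) : ℝ) = (d:ℝ) * (1+ε/8) := by
        rw [Finset.sum_const, nsmul_eq_mul]
        simp
      have hdiv : L r / (1+δ)^(W-1) ≤ L r * ε / (8*d) := by
        have h8d : (8:ℝ) * d ≤ ε * (1+δ)^(W-1) := by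
          rw [div_le_iff₀ hε] at hW
          linarith
        rw [div_le_div_iff₀ hpowW (by positivity : (0:ℝ) < 8*(d:ℝ))]
        nlinarith [hLr.le, hε.le, hpowW.le]
      have hpos5 : (0:ℝ) ≤ L r / (1+δ)^(W-1) := by positivity
      calc ∑ i ∈ A, y₁ i * (ε^3 * L r / (1+δ)^(mm i + (W-1)))
          ≤ ∑ i, y₁ i * ((∑ s, c i s / L s) * (L r / (1+δ)^(W-1))) := le_trans hstep1 hstep2
      _ = (∑ s, (∑ i, y₁ i * c i s) / L s) * (L r / (1+δ)^(W-1)) := hstep3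
      _ ≤ ((d:ℝ) * (1+ε/8)) * (L r / (1+δ)^(W-1)) := by
          apply mul_le_mul_of_nonneg_right _ hpos5
          rw [← hstep5]
          exact hstep4
      _ ≤ ((d:ℝ) * (1+ε/8)) * (L r * ε / (8*d)) := by
          apply mul_le_mul_of_nonneg_left hdiv
          positivity
      _ = (ε/8) * (1+ε/8) * L r := by
          field_simp
    -- assemble everything
    have hEnn : ∀ i ∈ A, (0:ℝ) ≤ y₁ i * (ε^3 * L r / (1+δ)^(mm i + (W-1))) := by
      intro i _
      apply mul_nonneg (hbox1 i).1
      positivity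
    have hdistrib : ∑ i ∈ A, y₁ i * ((1+δ) * c i r + ε^3 * L r / (1+δ)^(mm i + (W-1)))
        = (1+δ) * ∑ i ∈ A, y₁ i * c i r
          + ∑ i ∈ A, y₁ i * (ε^3 * L r / (1+δ)^(mm i + (W-1))) := by
      rw [Finset.mul_sum, ← Finset.sum_add_distrib]
      refine Finset.sum_congr rfl fun i _ => by ring
    have hcompl0 : (0:ℝ) ≤ ∑ i ∈ Finset.univ.filter (fun i : U => ¬ mm i < K), y₁ i * c i r := by
      apply Finset.sum_nonneg
      intro i _
      exact mul_nonneg (hbox1 i).1 (hc i r).1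
    have huniv : ∑ i ∈ A, y₁ i * c i r
        + ∑ i ∈ Finset.univ.filter (fun i : U => ¬ mm i < K), y₁ i * c i r
        = ∑ i, y₁ i * c i r := by
      rw [hAdef]
      exact Finset.sum_filter_add_sum_filter_not _ _ _
    have hfiber2 : ∑ i ∈ A, x' i * c i r
        ≤ (1+δ) * ∑ i ∈ A, y₁ i * c i r
          + ∑ i ∈ A, y₁ i * (ε^3 * L r / (1+δ)^(mm i + (W-1))) :=
      le_trans hfiber (le_of_eq hdistrib)
    have hbb : ∑ i ∈ Finset.univ.filter (fun i : U => ¬ mm i < K), y₁ i * c i r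
        ≤ (1+δ) * ∑ i ∈ Finset.univ.filter (fun i : U => ¬ mm i < K), y₁ i * c i r := by
      have hδb := mul_nonneg hδ0.le hcompl0
      linarith
    have huc : (1+δ) * ∑ i, y₁ i * c i r ≤ (1+δ) * ((1+ε/8) * L r) :=
      mul_le_mul_of_nonneg_left (hbud1' r) (by linarith)
    calc ∑ i, x' i * c i r
        = ∑ i ∈ A, x' i * c i r
          + ∑ i ∈ Finset.univ.filter (fun i : U => ¬ mm i < K), x' i * c i r := hsplit
    _ = ∑ i ∈ A, x' i * c i r
          + ∑ i ∈ Finset.univ.filter (fun i : U => ¬ mm i < K), y₁ i * c i r := by rw [hSpart]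
    _ ≤ (1+δ) * ∑ i ∈ A, y₁ i * c i r
          + ∑ i ∈ A, y₁ i * (ε^3 * L r / (1+δ)^(mm i + (W-1)))
          + (1+δ) * ∑ i ∈ Finset.univ.filter (fun i : U => ¬ mm i < K), y₁ i * c i r :=
        add_le_add hfiber2 hbb
    _ = (1+δ) * ∑ i, y₁ i * c i r
          + ∑ i ∈ A, y₁ i * (ε^3 * L r / (1+δ)^(mm i + (W-1))) := by
        rw [← huniv]
        ring
    _ ≤ (1+δ) * ((1+ε/8) * L r) + (ε/8) * (1+ε/8) * L r := add_le_add huc hE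
    _ ≤ (1+ε)^2 * L r := by
        rw [hδdef]
        nlinarith [mul_nonneg hε.le hLr.le, mul_nonneg (mul_nonneg hε.le hε.le) hLr.le]
end

section
/- Let U be a finite type and let f : Finset U → ℝ be a submodular set function with f(∅) ≥ 0. Let O ⊆ U be a finite set, let h ≥ 1 with h ≤ |O|, and let i_1, …, i_h ∈ O be chosen greedily by residual profit: writing K_ℓ = {i_1, …, i_ℓ} (with K_0 = ∅), for each ℓ ∈ {1,…,h} the element i_ℓ maximizes f(K_{ℓ−1} ∪ {i}) − f(K_{ℓ−1}) over all i ∈ O \ K_{ℓ−1}. Then for every j ∈ O \ K_h, f(K_h ∪ {j}) − f(K_h) ≤ f(K_h)/h. -/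
/-- The set of the first `ℓ` elements of the greedy sequence `a`. -/
def prefixSet {U : Type*} [DecidableEq U] {h : ℕ} (a : Fin h → U) (ℓ : ℕ) :
    Finset U :=
  (Finset.univ.filter fun j : Fin h => (j : ℕ) < ℓ).image a

lemma prefixSet_mono {U : Type*} [DecidableEq U] {h : ℕ} (a : Fin h → U)
    {ℓ m : ℕ} (hlm : ℓ ≤ m) : prefixSet a ℓ ⊆ prefixSet a m := by
  apply Finset.image_subset_image
  intro x hx
  simp only [Finset.mem_filter] at *
  exact ⟨hx.1, lt_of_lt_of_le hx.2 hlm⟩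

lemma prefixSet_zero {U : Type*} [DecidableEq U] {h : ℕ} (a : Fin h → U) :
    prefixSet a 0 = ∅ := by
  simp [prefixSet]

lemma prefixSet_succ {U : Type*} [DecidableEq U] {h : ℕ} (a : Fin h → U)
    (ℓ : Fin h) : prefixSet a ((ℓ : ℕ) + 1) = insert (a ℓ) (prefixSet a ℓ) := by
  ext x
  simp only [prefixSet, Finset.mem_image, Finset.mem_filter, Finset.mem_univ,
    true_and, Finset.mem_insert]
  constructor
  · rintro ⟨j, hj, rfl⟩
    rcases Nat.lt_succ_iff_lt_or_eq.mp hj with hj' | hj'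
    · exact Or.inr ⟨j, hj', rfl⟩
    · exact Or.inl (by rw [Fin.ext hj'])
  · rintro (rfl | ⟨j, hj, rfl⟩)
    · exact ⟨ℓ, Nat.lt_succ_self _, rfl⟩
    · exact ⟨j, Nat.lt_succ_of_lt hj, rfl⟩

theorem greedy_residual_profit_bound
    {U : Type*} [Fintype U] [DecidableEq U] (f : Finset U → ℝ)
    (hsub : ∀ S T : Finset U, f (S ∪ T) + f (S ∩ T) ≤ f S + f T)
    (hempty : 0 ≤ f ∅)
    (O : Finset U) (h : ℕ) (hh : 1 ≤ h) (hhO : h ≤ O.card)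
    (a : Fin h → U) (ha : Function.Injective a)
    (haO : ∀ ℓ : Fin h, a ℓ ∈ O \ prefixSet a ℓ)
    (hgreedy : ∀ ℓ : Fin h, ∀ i ∈ O \ prefixSet a ℓ,
      f (insert i (prefixSet a ℓ)) - f (prefixSet a ℓ) ≤
        f (insert (a ℓ) (prefixSet a ℓ)) - f (prefixSet a ℓ)) :
    ∀ j ∈ O \ prefixSet a h,
      f (insert j (prefixSet a h)) - f (prefixSet a h) ≤
        f (prefixSet a h) / h := by
  intro j hj
  set K := prefixSet a h with hK
  rw [Finset.mem_sdiff] at hj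
  -- submodularity: marginal decreases
  have hdecr : ∀ S T : Finset U, S ⊆ T → j ∉ T →
      f (insert j T) - f T ≤ f (insert j S) - f S := by
    intro S T hST hjT
    have h1 := hsub (insert j S) T
    have h2 : insert j S ∪ T = insert j T := by
      rw [Finset.insert_union, Finset.union_eq_right.mpr hST]
    have h3 : insert j S ∩ T = S := by
      ext x
      simp only [Finset.mem_inter, Finset.mem_insert]
      constructor
      · rintro ⟨rfl | hx, hxT⟩
        · exact absurd hxT hjT
        · exact hx
      · intro hx; exact ⟨Or.inr hx, hST hx⟩
    rw [h2, h3] at h1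
    linarith
  -- per-step bound
  have hstep : ∀ ℓ : Fin h,
      f (insert j K) - f K ≤ f (prefixSet a ((ℓ : ℕ) + 1)) - f (prefixSet a ℓ) := by
    intro ℓ
    have hsub' : prefixSet a ℓ ⊆ K := prefixSet_mono a (le_of_lt ℓ.2)
    have hjℓ : j ∈ O \ prefixSet a ℓ :=
      Finset.mem_sdiff.mpr ⟨hj.1, fun hmem => hj.2 (hsub' hmem)⟩
    have h1 := hgreedy ℓ j hjℓ
    have h2 := hdecr (prefixSet a ℓ) K hsub' hj.2
    rw [prefixSet_succ]
    linarith
  -- telescoping sum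
  have htel : ∑ ℓ : Fin h, (f (prefixSet a ((ℓ : ℕ) + 1)) - f (prefixSet a ℓ))
      = f K - f (prefixSet a 0) := by
    rw [Fin.sum_univ_eq_sum_range (fun ℓ => f (prefixSet a (ℓ + 1)) - f (prefixSet a ℓ))]
    exact Finset.sum_range_sub (fun ℓ => f (prefixSet a ℓ)) h
  have hsum : (h : ℝ) * (f (insert j K) - f K) ≤ f K := by
    calc (h : ℝ) * (f (insert j K) - f K)
        = ∑ _ℓ : Fin h, (f (insert j K) - f K) := by
          rw [Finset.sum_const, Finset.card_univ, Fintype.card_fin, nsmul_eq_mul]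
      _ ≤ ∑ ℓ : Fin h, (f (prefixSet a ((ℓ : ℕ) + 1)) - f (prefixSet a ℓ)) :=
          Finset.sum_le_sum fun ℓ _ => hstep ℓ
      _ = f K - f (prefixSet a 0) := htel
      _ ≤ f K := by rw [prefixSet_zero]; linarith
  have hhpos : (0 : ℝ) < h := by exact_mod_cast hh
  rw [le_div_iff₀ hhpos]
  linarith
end

section
/- Let U be a finite type, let f : Finset U → ℝ be a submodular set function, and let F : [0,1]^U → ℝ be its extension by expectation. For any x ∈ [0,1]^U and any two distinct elements i, j ∈ U, the one-variable function δ ↦ F(x + δ·e_i − δ·e_j), defined on the interval of δ for which x + δ·e_i − δ·e_j ∈ [0,1]^U, is convex (where e_i, e_j are the standard unit vectors). -/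
private lemma sum_split_aux {U : Type*} [Fintype U] [DecidableEq U]
    (a : U) (p : Finset U → Prop) [DecidablePred p]
    (hp : ∀ R : Finset U, a ∉ R → (p R ↔ p (insert a R))) (h : Finset U → ℝ) :
    ∑ R ∈ Finset.univ.filter p, h R
      = ∑ R ∈ Finset.univ.filter (fun R => p R ∧ a ∉ R), (h R + h (insert a R)) := by
  classical
  have h1 : Finset.univ.filter (fun R => p R ∧ a ∉ R)
      = (Finset.univ.filter p).filter (fun R => a ∉ R) := by
    rw [Finset.filter_filter]
  rw [h1, ← Finset.sum_filter_add_sum_filter_not (Finset.univ.filter p) (fun R => a ∉ R) h,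
    Finset.sum_add_distrib]
  congr 1
  refine Finset.sum_bij' (fun R _ => R.erase a) (fun R _ => insert a R) ?_ ?_ ?_ ?_ ?_
  · intro R hR
    simp only [Finset.mem_filter, Finset.mem_univ, not_not, true_and] at hR ⊢
    obtain ⟨hpR, haR⟩ := hR
    have hnot : a ∉ R.erase a := Finset.notMem_erase a R
    refine ⟨?_, hnot⟩
    rw [hp _ hnot, Finset.insert_erase haR]
    exact hpR
  · intro R hR
    simp only [Finset.mem_filter, Finset.mem_univ, not_not, true_and] at hR ⊢
    exact ⟨(hp R hR.2).mp hR.1, Finset.mem_insert_self a R⟩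
  · intro R hR
    simp only [Finset.mem_filter, Finset.mem_univ, not_not, true_and] at hR
    exact Finset.insert_erase hR.2
  · intro R hR
    simp only [Finset.mem_filter, Finset.mem_univ, true_and] at hR
    exact Finset.erase_insert hR.2
  · intro R hR
    simp only [Finset.mem_filter, Finset.mem_univ, not_not, true_and] at hR
    rw [Finset.insert_erase hR.2]

private lemma quad_rep {U : Type*} [Fintype U] [DecidableEq U] (f : Finset U → ℝ)
    (hsub : ∀ S T : Finset U, f (S ∪ T) + f (S ∩ T) ≤ f S + f T)
    (x : U → ℝ) (hx : ∀ k, x k ∈ Set.Icc (0 : ℝ) 1)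
    (i j : U) (hij : i ≠ j) (y : ℝ → U → ℝ)
    (hyi : ∀ δ, y δ i = x i + δ) (hyj : ∀ δ, y δ j = x j - δ)
    (hyk : ∀ δ k, k ≠ i → k ≠ j → y δ k = x k) :
    ∃ A B C : ℝ, 0 ≤ C ∧ ∀ δ : ℝ, mulExt f (y δ) = A + B * δ + C * δ ^ 2 := by
  classical
  set term : ℝ → Finset U → ℝ :=
    fun δ R => f R * ((∏ k ∈ R, y δ k) * ∏ k ∈ Rᶜ, (1 - y δ k)) with hterm
  have hg : ∀ δ, mulExt f (y δ) = ∑ R : Finset U, term δ R := by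
    intro δ; rfl
  set T := Finset.univ.filter (fun S : Finset U => j ∉ S ∧ i ∉ S) with hT
  -- double split of the sum
  have hsplit : ∀ δ, mulExt f (y δ)
      = ∑ S ∈ T,
          (term δ S + term δ (insert i S)
            + (term δ (insert j S) + term δ (insert i (insert j S)))) := by
    intro δ
    rw [hg]
    have e1 : ∑ R : Finset U, term δ R
        = ∑ R ∈ Finset.univ.filter (fun R : Finset U => True), term δ R := by
      simp
    rw [e1, sum_split_aux j _ (by intro R _; simp) (term δ)]
    rw [sum_split_aux i (fun R => (True : Prop) ∧ j ∉ R)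
      (by
        intro R hiR
        constructor
        · rintro ⟨-, hjR⟩
          exact ⟨trivial, by simp [Finset.mem_insert, Ne.symm hij, hjR]⟩
        · rintro ⟨-, hjR⟩
          exact ⟨trivial, fun hc => hjR (Finset.mem_insert_of_mem hc)⟩)
      (fun R => term δ R + term δ (insert j R))]
    apply Finset.sum_congr
    · ext R; simp [hT, and_comm]
    · intro R hR
      rw [Finset.insert_comm i j R]
      ring
  -- weight and bracket
  set w : Finset U → ℝ :=
    fun S => (∏ k ∈ S, x k) * ∏ k ∈ Sᶜ \ {i, j}, (1 - x k) with hw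
  set br : Finset U → ℝ → ℝ :=
    fun S δ => f S * ((1 - (x i + δ)) * (1 - (x j - δ)))
      + f (insert i S) * ((x i + δ) * (1 - (x j - δ)))
      + f (insert j S) * ((1 - (x i + δ)) * (x j - δ))
      + f (insert i (insert j S)) * ((x i + δ) * (x j - δ)) with hbr
  set c : Finset U → ℝ :=
    fun S => w S * (f (insert i S) + f (insert j S)
      - f S - f (insert i (insert j S))) with hc
  -- per-S bracket form
  have hq : ∀ S ∈ T, ∀ δ,
      term δ S + term δ (insert i S)
        + (term δ (insert j S) + term δ (insert i (insert j S)))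
      = w S * br S δ := by
    intro S hS δ
    simp only [hT, Finset.mem_filter, Finset.mem_univ, true_and] at hS
    obtain ⟨hjS, hiS⟩ := hS
    have hiD : i ∉ Sᶜ \ {i, j} := by simp
    have hjD : j ∉ Sᶜ \ {i, j} := by simp
    have hijD : i ∉ insert j (Sᶜ \ {i, j}) := by simp [hij]
    have hiS' : i ∉ insert j S := by simp [hij, hiS]
    have hc0 : Sᶜ = insert i (insert j (Sᶜ \ {i, j})) := by
      ext k
      by_cases h1 : k = i
      · subst h1; simp [hiS]
      · by_cases h2 : k = j
        · subst h2; simp [hjS, h1]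
        · simp [h1, h2]
    have hc1 : (insert i S)ᶜ = insert j (Sᶜ \ {i, j}) := by
      ext k
      by_cases h1 : k = i
      · subst h1; simp [hiS, hij]
      · by_cases h2 : k = j
        · subst h2; simp [hjS, h1, Ne.symm hij]
        · simp [h1, h2]
    have hc2 : (insert j S)ᶜ = insert i (Sᶜ \ {i, j}) := by
      ext k
      by_cases h1 : k = i
      · subst h1; simp [hiS, hij]
      · by_cases h2 : k = j
        · subst h2; simp [hjS, h1, Ne.symm hij]
        · simp [h1, h2]
    have hc3 : (insert i (insert j S))ᶜ = Sᶜ \ {i, j} := by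
      ext k
      by_cases h1 : k = i
      · subst h1; simp [hiS, hij]
      · by_cases h2 : k = j
        · subst h2; simp [hjS, h1]
        · simp [h1, h2]
    have pS : ∏ k ∈ S, y δ k = ∏ k ∈ S, x k :=
      Finset.prod_congr rfl (fun k hk =>
        hyk δ k (fun h => hiS (h ▸ hk)) (fun h => hjS (h ▸ hk)))
    have pD : ∏ k ∈ Sᶜ \ {i, j}, (1 - y δ k) = ∏ k ∈ Sᶜ \ {i, j}, (1 - x k) :=
      Finset.prod_congr rfl (fun k hk => by
        rw [hyk δ k (fun h => hiD (h ▸ hk)) (fun h => hjD (h ▸ hk))])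
    have hwS : w S = (∏ k ∈ S, x k) * ∏ k ∈ Sᶜ \ {i, j}, (1 - x k) := by
      rw [hw]
    have p0 : ∏ k ∈ Sᶜ, (1 - y δ k)
        = (1 - y δ i) * ((1 - y δ j) * ∏ k ∈ Sᶜ \ {i, j}, (1 - x k)) := by
      conv_lhs => rw [hc0]
      rw [Finset.prod_insert hijD, Finset.prod_insert hjD, pD]
    have p1 : ∏ k ∈ (insert i S)ᶜ, (1 - y δ k)
        = (1 - y δ j) * ∏ k ∈ Sᶜ \ {i, j}, (1 - x k) := by
      rw [hc1, Finset.prod_insert hjD, pD]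
    have p2 : ∏ k ∈ (insert j S)ᶜ, (1 - y δ k)
        = (1 - y δ i) * ∏ k ∈ Sᶜ \ {i, j}, (1 - x k) := by
      rw [hc2, Finset.prod_insert hiD, pD]
    have p3 : ∏ k ∈ (insert i (insert j S))ᶜ, (1 - y δ k)
        = ∏ k ∈ Sᶜ \ {i, j}, (1 - x k) := by
      rw [hc3, pD]
    have q1 : ∏ k ∈ insert i S, y δ k = y δ i * ∏ k ∈ S, x k := by
      rw [Finset.prod_insert hiS, pS]
    have q2 : ∏ k ∈ insert j S, y δ k = y δ j * ∏ k ∈ S, x k := by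
      rw [Finset.prod_insert hjS, pS]
    have q3 : ∏ k ∈ insert i (insert j S), y δ k
        = y δ i * (y δ j * ∏ k ∈ S, x k) := by
      rw [Finset.prod_insert hiS', Finset.prod_insert hjS, pS]
    simp only [hterm]
    rw [p0, p1, p2, p3, q3, q1, q2, pS, hyi, hyj, hwS]
    simp only [hbr]
    ring
  -- nonnegativity of the quadratic coefficient
  have hcS : ∀ S ∈ T, 0 ≤ c S := by
    intro S hS
    simp only [hT, Finset.mem_filter, Finset.mem_univ, true_and] at hS
    obtain ⟨hjS, hiS⟩ := hS
    have hw0 : 0 ≤ w S := by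
      rw [hw]
      apply mul_nonneg
      · exact Finset.prod_nonneg fun k _ => (hx k).1
      · exact Finset.prod_nonneg fun k _ => by linarith [(hx k).2]
    have hsub' : f (insert i S ∪ insert j S) + f (insert i S ∩ insert j S)
        ≤ f (insert i S) + f (insert j S) := hsub _ _
    have hu : insert i S ∪ insert j S = insert i (insert j S) := by
      rw [Finset.insert_union, Finset.union_insert, Finset.union_self]
    have hi2 : insert i S ∩ insert j S = S := by
      ext k
      by_cases h1 : k = i <;> by_cases h2 : k = j <;> simp_all
    rw [hu, hi2] at hsub'
    rw [hc]
    exact mul_nonneg hw0 (by linarith)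
  -- assemble
  refine ⟨∑ S ∈ T, w S * br S 0,
    ∑ S ∈ T, (w S * br S 1 - w S * br S 0 - c S),
    ∑ S ∈ T, c S, Finset.sum_nonneg hcS, ?_⟩
  intro δ
  rw [hsplit δ, Finset.sum_mul, Finset.sum_mul, ← Finset.sum_add_distrib,
    ← Finset.sum_add_distrib]
  apply Finset.sum_congr rfl
  intro S hS
  rw [hq S hS δ]
  simp only [hbr, hc]
  ring

theorem mulExt_convex_along_swap_direction
    {U : Type*} [Fintype U] [DecidableEq U] (f : Finset U → ℝ)
    (hsub : ∀ S T : Finset U, f (S ∪ T) + f (S ∩ T) ≤ f S + f T)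
    (x : U → ℝ) (hx : ∀ k, x k ∈ Set.Icc (0 : ℝ) 1)
    (i j : U) (hij : i ≠ j) :
    ConvexOn ℝ
      {δ : ℝ | ∀ k : U,
        x k + (if k = i then δ else 0) - (if k = j then δ else 0) ∈
          Set.Icc (0 : ℝ) 1}
      (fun δ => mulExt f
        (fun k => x k + (if k = i then δ else 0) - (if k = j then δ else 0))) := by
  classical
  obtain ⟨A, B, C, hC, hrep⟩ := quad_rep f hsub x hx i j hij
    (fun δ k => x k + (if k = i then δ else 0) - (if k = j then δ else 0))
    (fun δ => by simp [hij]) (fun δ => by simp [Ne.symm hij])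
    (fun δ k h1 h2 => by simp [h1, h2])
  constructor
  · intro u hu v hv a b ha hb hab
    intro k
    have h1 := hu k
    have h2 := hv k
    have key : x k + (if k = i then a • u + b • v else 0)
          - (if k = j then a • u + b • v else 0)
        = a • (x k + (if k = i then u else 0) - (if k = j then u else 0))
          + b • (x k + (if k = i then v else 0) - (if k = j then v else 0)) := by
      simp only [smul_eq_mul]
      split_ifs <;> linear_combination (x k) * hab.symm
    rw [key]
    exact (convex_Icc (0 : ℝ) 1) h1 h2 ha hb hab
  · intro u hu v hv a b ha hb hab
    have e1 : mulExt f (fun k => x k + (if k = i then u else 0)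
        - (if k = j then u else 0)) = A + B * u + C * u ^ 2 := hrep u
    have e2 : mulExt f (fun k => x k + (if k = i then v else 0)
        - (if k = j then v else 0)) = A + B * v + C * v ^ 2 := hrep v
    have e3 : mulExt f (fun k => x k + (if k = i then a • u + b • v else 0)
        - (if k = j then a • u + b • v else 0))
        = A + B * (a • u + b • v) + C * (a • u + b • v) ^ 2 := hrep (a • u + b • v)
    have key2 : a * (A + B * u + C * u ^ 2) + b * (A + B * v + C * v ^ 2)
        = A + B * (a * u + b * v) + C * (a * u + b * v) ^ 2
          + C * (a * b * (u - v) ^ 2) := by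
      have hb' : b = 1 - a := by linarith
      subst hb'
      ring
    simp only [smul_eq_mul] at e1 e2 e3 ⊢
    rw [e1, e2, e3, key2]
    linarith [mul_nonneg hC (mul_nonneg (mul_nonneg ha hb) (sq_nonneg (u - v)))]
end

section
/- Let U be a finite type, let f : Finset U → ℝ be a submodular set function with f(∅) ≥ 0, and let F : [0,1]^U → ℝ be its extension by expectation. Then for every x ∈ [0,1]^U and every λ ∈ [0,1], F(λ·x) ≥ λ·F(x). -/
/-- Partial multilinear extension over a ground set `V`. -/
noncomputable def partExt {U : Type*} [DecidableEq U]
    (f : Finset U → ℝ) (V : Finset U) (y : U → ℝ) : ℝ :=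
  ∑ R ∈ V.powerset, f R * ((∏ i ∈ R, y i) * ∏ i ∈ V \ R, (1 - y i))

lemma partExt_weights_sum {U : Type*} [DecidableEq U] (V : Finset U) (y : U → ℝ) :
    ∑ R ∈ V.powerset, (∏ i ∈ R, y i) * ∏ i ∈ V \ R, (1 - y i) = 1 := by
  rw [← Finset.prod_add]
  simp

lemma partExt_empty {U : Type*} [DecidableEq U] (f : Finset U → ℝ) (y : U → ℝ) :
    partExt f ∅ y = f ∅ := by
  simp [partExt]

lemma partExt_insert {U : Type*} [DecidableEq U] (f : Finset U → ℝ) {V : Finset U}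
    {a : U} (ha : a ∉ V) (y : U → ℝ) :
    partExt f (insert a V) y
      = (1 - y a) * partExt f V y + y a * partExt (fun S => f (insert a S)) V y := by
  unfold partExt
  rw [Finset.sum_powerset_insert ha, Finset.mul_sum, Finset.mul_sum]
  congr 1
  · refine Finset.sum_congr rfl fun R hR => ?_
    rw [Finset.mem_powerset] at hR
    have haR : a ∉ R := fun h => ha (hR h)
    have h1 : insert a V \ R = insert a (V \ R) := by
      ext b; simp only [Finset.mem_sdiff, Finset.mem_insert]
      constructor
      · rintro ⟨hb1 | hb1, hb2⟩
        · exact Or.inl hb1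
        · exact Or.inr ⟨hb1, hb2⟩
      · rintro (rfl | ⟨hb1, hb2⟩)
        · exact ⟨Or.inl rfl, haR⟩
        · exact ⟨Or.inr hb1, hb2⟩
    have haVR : a ∉ V \ R := fun h => ha (Finset.mem_sdiff.mp h).1
    rw [h1, Finset.prod_insert haVR]
    ring
  · refine Finset.sum_congr rfl fun R hR => ?_
    rw [Finset.mem_powerset] at hR
    have haR : a ∉ R := fun h => ha (hR h)
    have h1 : insert a V \ insert a R = V \ R := by
      ext b; simp only [Finset.mem_sdiff, Finset.mem_insert]
      constructor
      · rintro ⟨hb1 | hb1, hb2⟩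
        · exact absurd (Or.inl hb1) hb2
        · exact ⟨hb1, fun h => hb2 (Or.inr h)⟩
      · rintro ⟨hb1, hb2⟩
        exact ⟨Or.inr hb1, by rintro (rfl | h); exact ha hb1; exact hb2 h⟩
    rw [h1, Finset.prod_insert haR]
    ring

lemma partExt_shift_le {U : Type*} [DecidableEq U] (f : Finset U → ℝ)
    (hsub : ∀ S T : Finset U, f (S ∪ T) + f (S ∩ T) ≤ f S + f T)
    (x : U → ℝ) (hx : ∀ i, 0 ≤ x i ∧ x i ≤ 1) {a : U} {V : Finset U} (ha : a ∉ V) :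
    partExt (fun S => f (insert a S)) V x ≤ partExt f V x + (f {a} - f ∅) := by
  have key : ∀ R ∈ V.powerset,
      f (insert a R) * ((∏ i ∈ R, x i) * ∏ i ∈ V \ R, (1 - x i))
        ≤ (f R + (f {a} - f ∅)) * ((∏ i ∈ R, x i) * ∏ i ∈ V \ R, (1 - x i)) := by
    intro R hR
    rw [Finset.mem_powerset] at hR
    have haR : a ∉ R := fun h => ha (hR h)
    have hs := hsub {a} R
    have hu : {a} ∪ R = insert a R := by simp
    have hi : {a} ∩ R = ∅ := by
      ext b; simp only [Finset.mem_inter, Finset.mem_singleton, Finset.notMem_empty,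
        iff_false]
      rintro ⟨rfl, hb⟩; exact haR hb
    rw [hu, hi] at hs
    have hw : (0:ℝ) ≤ (∏ i ∈ R, x i) * ∏ i ∈ V \ R, (1 - x i) := by
      apply mul_nonneg
      · exact Finset.prod_nonneg fun i _ => (hx i).1
      · exact Finset.prod_nonneg fun i hi => by linarith [(hx i).2]
    apply mul_le_mul_of_nonneg_right _ hw
    linarith
  calc partExt (fun S => f (insert a S)) V x
      ≤ ∑ R ∈ V.powerset, (f R + (f {a} - f ∅)) *
          ((∏ i ∈ R, x i) * ∏ i ∈ V \ R, (1 - x i)) := Finset.sum_le_sum key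
    _ = partExt f V x + (f {a} - f ∅) := by
        simp only [add_mul, Finset.sum_add_distrib, partExt]
        rw [← Finset.mul_sum, partExt_weights_sum, mul_one]

lemma partExt_key {U : Type*} [DecidableEq U] (lam : ℝ) (h0 : 0 ≤ lam) (h1 : lam ≤ 1)
    (x : U → ℝ) (hx : ∀ i, 0 ≤ x i ∧ x i ≤ 1) :
    ∀ (V : Finset U) (f : Finset U → ℝ),
      (∀ S T : Finset U, f (S ∪ T) + f (S ∩ T) ≤ f S + f T) →
      lam * partExt f V x + (1 - lam) * f ∅ ≤ partExt f V (fun i => lam * x i) := by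
  intro V
  induction V using Finset.induction_on with
  | empty =>
      intro f _
      rw [partExt_empty, partExt_empty]; linarith
  | @insert a V ha ih =>
      intro f hsub
      have hfa : ∀ S T : Finset U,
          (fun S => f (insert a S)) (S ∪ T) + (fun S => f (insert a S)) (S ∩ T)
            ≤ (fun S => f (insert a S)) S + (fun S => f (insert a S)) T := by
        intro S T
        have h := hsub (insert a S) (insert a T)
        have hu : insert a S ∪ insert a T = insert a (S ∪ T) := by
          rw [Finset.insert_union, Finset.union_insert, Finset.insert_idem]
        rw [hu, ← Finset.insert_inter_distrib] at h
        exact h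
      have hA := ih (fun S => f (insert a S)) hfa
      have hB := ih f hsub
      have hAB := partExt_shift_le f hsub x hx ha
      rw [partExt_insert f ha, partExt_insert f ha]
      simp only [Finset.insert_empty] at hA
      set A := partExt (fun S => f (insert a S)) V x with hAdef
      set B := partExt f V x with hBdef
      set Al := partExt (fun S => f (insert a S)) V (fun i => lam * x i) with hAldef
      set Bl := partExt f V (fun i => lam * x i) with hBldef
      have hxa0 := (hx a).1
      have hxa1 := (hx a).2
      have c1 : (0:ℝ) ≤ lam * x a := mul_nonneg h0 hxa0
      have c2 : (0:ℝ) ≤ 1 - lam * x a := by nlinarith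
      have c3 : (0:ℝ) ≤ lam * (1 - lam) * x a :=
        mul_nonneg (mul_nonneg h0 (by linarith)) hxa0
      have H1 := mul_le_mul_of_nonneg_left hA c1
      have H2 := mul_le_mul_of_nonneg_left hB c2
      have H3 := mul_le_mul_of_nonneg_left hAB c3
      nlinarith [H1, H2, H3]

lemma mulExt_eq_partExt {U : Type*} [Fintype U] [DecidableEq U]
    (f : Finset U → ℝ) (y : U → ℝ) : mulExt f y = partExt f Finset.univ y := by
  unfold mulExt partExt
  rw [Finset.powerset_univ]
  refine Finset.sum_congr rfl fun R _ => ?_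
  rw [Finset.compl_eq_univ_sdiff]

theorem mulExt_scaling_lower_bound
    {U : Type*} [Fintype U] [DecidableEq U] (f : Finset U → ℝ)
    (hsub : ∀ S T : Finset U, f (S ∪ T) + f (S ∩ T) ≤ f S + f T)
    (hempty : 0 ≤ f ∅)
    (x : U → ℝ) (hx : ∀ i, x i ∈ Set.Icc (0 : ℝ) 1)
    (lam : ℝ) (hlam : lam ∈ Set.Icc (0 : ℝ) 1) :
    lam * mulExt f x ≤ mulExt f (fun i => lam * x i) := by
  obtain ⟨h0, h1⟩ := hlam
  have hx' : ∀ i, 0 ≤ x i ∧ x i ≤ 1 := fun i => ⟨(hx i).1, (hx i).2⟩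
  have key := partExt_key lam h0 h1 x hx' Finset.univ f hsub
  rw [mulExt_eq_partExt, mulExt_eq_partExt]
  nlinarith
end
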